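/- Let {f_i}_{i∈S} be a Parseval frame for a Hilbert space H and P an orthogonal projection on H. Then the Gram matrices G = (⟨f_j, f_i⟩), R = (⟨Pf_j, Pf_i⟩) and Q = (⟨(I−P)f_j, (I−P)f_i⟩) are all projection operators on ℓ²(S) and G = R + Q. -/

import Mathlib

open scoped InnerProductSpace

lemma clm_ext_lp_single {S : Type*} [DecidableEq S]
    {W : Type*} [NormedAddCommGroup W] [NormedSpace ℂ W]
    (T T' : lp (fun _ : S => ℂ) 2 →L[ℂ] W)
    (h : ∀ j, T (lp.single 2 j 1) = T' (lp.single 2 j 1)) : T = T' := by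
  ext x
  have hx : HasSum (fun i => lp.single (E := fun _ : S => ℂ) 2 i (x i)) x :=
    lp.hasSum_single ENNReal.ofNat_ne_top x
  have key : ∀ i, T (lp.single 2 i (x i)) = T' (lp.single 2 i (x i)) := by
    intro i
    have h1 : lp.single (E := fun _ : S => ℂ) 2 i (x i) = x i • lp.single 2 i 1 := by
      rw [← lp.single_smul]; simp
    rw [h1, map_smul, map_smul, h i]
  have h1 : HasSum (fun i => T (lp.single (E := fun _ : S => ℂ) 2 i (x i))) (T x) :=
    T.hasSum hx
  have h2 : HasSum (fun i => T (lp.single (E := fun _ : S => ℂ) 2 i (x i))) (T' x) := by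
    simpa [key] using T'.hasSum hx
  exact h1.unique h2

theorem gram_projections_add
    {S : Type*} [DecidableEq S] {H : Type*} [NormedAddCommGroup H]
    [InnerProductSpace ℂ H] [CompleteSpace H]
    (f : S → H) (hParseval : ∀ x : H, ∑' i : S, ‖⟪x, f i⟫_ℂ‖ ^ 2 = ‖x‖ ^ 2)
    (P : H →L[ℂ] H) (hPidem : IsIdempotentElem P) (hPsa : IsSelfAdjoint P)
    (G R Q : lp (fun _ : S => ℂ) 2 →L[ℂ] lp (fun _ : S => ℂ) 2)
    (hG : ∀ i j : S, ⟪G (lp.single 2 j 1), lp.single 2 i 1⟫_ℂ = ⟪f j, f i⟫_ℂ)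
    (hR : ∀ i j : S, ⟪R (lp.single 2 j 1), lp.single 2 i 1⟫_ℂ = ⟪P (f j), P (f i)⟫_ℂ)
    (hQ : ∀ i j : S, ⟪Q (lp.single 2 j 1), lp.single 2 i 1⟫_ℂ
        = ⟪((1 : H →L[ℂ] H) - P) (f j), ((1 : H →L[ℂ] H) - P) (f i)⟫_ℂ) :
    (IsIdempotentElem G ∧ IsSelfAdjoint G) ∧
    (IsIdempotentElem R ∧ IsSelfAdjoint R) ∧
    (IsIdempotentElem Q ∧ IsSelfAdjoint Q) ∧
    G = R + Q := by
  classical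
  -- summability of the frame coefficients
  have hsum : ∀ x : H, Summable (fun i => ‖⟪x, f i⟫_ℂ‖ ^ 2) := by
    intro x
    by_contra h
    have h0 : ‖x‖ ^ 2 = 0 := by rw [← hParseval x, tsum_eq_zero_of_not_summable h]
    have hx : x = 0 := by
      have hn : ‖x‖ = 0 := by nlinarith [norm_nonneg x]
      simpa using hn
    exact h (by simpa [hx] using (summable_zero : Summable fun _ : S => (0 : ℝ)))
  have mem : ∀ x : H, Memℓp (fun i => ⟪f i, x⟫_ℂ) 2 := by
    intro x
    apply memℓp_gen
    have h2 : ∀ i, ‖⟪f i, x⟫_ℂ‖ ^ (ENNReal.toReal 2) = ‖⟪x, f i⟫_ℂ‖ ^ 2 := by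
      intro i
      rw [← inner_conj_symm x (f i), RCLike.norm_conj, ENNReal.toReal_ofNat,
        Real.rpow_two, sq]
    simpa only [h2] using hsum x
  -- the analysis operator as a linear isometry
  let V : H →ₗᵢ[ℂ] lp (fun _ : S => ℂ) 2 :=
    { toFun := fun x => ⟨fun i => ⟪f i, x⟫_ℂ, mem x⟩
      map_add' := by
        intro x y
        apply lp.ext
        funext i
        simp [inner_add_right]; rfl
      map_smul' := by
        intro c x
        apply lp.ext
        funext i
        simp [inner_smul_right]
      norm_map' := by
        intro x
        show ‖(⟨fun i => ⟪f i, x⟫_ℂ, mem x⟩ : lp (fun _ : S => ℂ) 2)‖ = ‖x‖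
        have hp : (0:ℝ) < ENNReal.toReal 2 := by norm_num
        have h1 := lp.norm_rpow_eq_tsum hp (⟨fun i => ⟪f i, x⟫_ℂ, mem x⟩ : lp (fun _ : S => ℂ) 2)
        have h2 : ∀ i, ‖⟪f i, x⟫_ℂ‖ ^ (ENNReal.toReal 2) = ‖⟪x, f i⟫_ℂ‖ ^ 2 := by
          intro i
          rw [← inner_conj_symm x (f i), RCLike.norm_conj, ENNReal.toReal_ofNat,
            Real.rpow_two, sq]
        simp only [h2] at h1
        rw [hParseval x] at h1
        rw [ENNReal.toReal_ofNat, Real.rpow_two, sq, ← sq] at h1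
        nlinarith [norm_nonneg x,
          norm_nonneg (⟨fun i => ⟪f i, x⟫_ℂ, mem x⟩ : lp (fun _ : S => ℂ) 2)] }
  -- synthesis / adjoint operators
  let Vc : H →L[ℂ] lp (fun _ : S => ℂ) 2 := V.toContinuousLinearMap
  let A : lp (fun _ : S => ℂ) 2 →L[ℂ] H := ContinuousLinearMap.adjoint Vc
  have hVc : ∀ (x : H) (i : S), (Vc x : ∀ _ : S, ℂ) i = ⟪f i, x⟫_ℂ := fun x i => rfl
  have hA : ∀ j, A (lp.single 2 j 1) = f j := by
    intro j
    apply ext_inner_right ℂ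
    intro x
    rw [ContinuousLinearMap.adjoint_inner_left, lp.inner_single_left]
    simp [hVc]
  have hAV : A.comp Vc = 1 := by
    ext x
    apply ext_inner_right ℂ
    intro y
    rw [ContinuousLinearMap.comp_apply, ContinuousLinearMap.adjoint_inner_left,
      ContinuousLinearMap.one_apply]
    exact V.inner_map_map x y
  have hmat : ∀ (T : lp (fun _ : S => ℂ) 2 →L[ℂ] lp (fun _ : S => ℂ) 2) (g : S → H),
      (∀ i j : S, ⟪T (lp.single 2 j 1), lp.single 2 i 1⟫_ℂ = ⟪g j, g i⟫_ℂ) →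
      (∀ i j : S, ⟪g i, g j⟫_ℂ = ⟪f i, g j⟫_ℂ) →
      ∀ j, T (lp.single 2 j 1) = Vc (g j) := by
    intro T g hT hg j
    apply lp.ext
    funext i
    have h1 := hT i j
    rw [lp.inner_single_right, RCLike.inner_apply, one_mul] at h1
    have h2 : (T (lp.single 2 j 1) : ∀ _ : S, ℂ) i = ⟪g i, g j⟫_ℂ := by
      have h3 := congrArg (starRingEnd ℂ) h1
      simpa [inner_conj_symm] using h3
    rw [h2, hVc, hg]
  have hAV' : ∀ y : H, A (Vc y) = y := by
    intro y
    have := ContinuousLinearMap.ext_iff.mp hAV y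
    simpa using this
  -- generic facts about projections on H
  have hWmul : ∀ (W : H →L[ℂ] H), IsIdempotentElem W → ∀ z, W (W z) = W z := by
    intro W hW z
    have := ContinuousLinearMap.ext_iff.mp hW z
    simpa [ContinuousLinearMap.mul_apply] using this
  have hWinner : ∀ (W : H →L[ℂ] H), IsIdempotentElem W → IsSelfAdjoint W →
      ∀ a b : H, ⟪W a, W b⟫_ℂ = ⟪a, W b⟫_ℂ := by
    intro W hWi hWs a b
    have h := ContinuousLinearMap.adjoint_inner_left W (W b) a
    rw [ContinuousLinearMap.isSelfAdjoint_iff'.mp hWs, hWmul W hWi] at h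
    exact h
  -- generic: Vc ∘ W ∘ A is an orthogonal projection on ℓ²
  have key : ∀ W : H →L[ℂ] H, IsIdempotentElem W → IsSelfAdjoint W →
      IsIdempotentElem (Vc.comp (W.comp A)) ∧ IsSelfAdjoint (Vc.comp (W.comp A)) := by
    intro W hWi hWs
    constructor
    · show (Vc.comp (W.comp A)) * (Vc.comp (W.comp A)) = Vc.comp (W.comp A)
      ext x
      simp only [ContinuousLinearMap.mul_apply, ContinuousLinearMap.comp_apply]
      rw [hAV' (W (A x)), hWmul W hWi (A x)]
    · rw [ContinuousLinearMap.isSelfAdjoint_iff', ContinuousLinearMap.adjoint_comp,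
        ContinuousLinearMap.adjoint_comp, ContinuousLinearMap.adjoint_adjoint,
        ContinuousLinearMap.isSelfAdjoint_iff'.mp hWs, ContinuousLinearMap.comp_assoc]
  -- 1 - P is also an orthogonal projection
  have hP'idem : IsIdempotentElem ((1 : H →L[ℂ] H) - P) := hPidem.one_sub
  have hP'sa : IsSelfAdjoint ((1 : H →L[ℂ] H) - P) := by
    rw [IsSelfAdjoint, star_sub, star_one, hPsa.star_eq]
  -- factorizations of G, R, Q
  have hGe : G = Vc.comp ((1 : H →L[ℂ] H).comp A) := by
    apply clm_ext_lp_single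
    intro j
    rw [ContinuousLinearMap.comp_apply, ContinuousLinearMap.comp_apply, hA,
      ContinuousLinearMap.one_apply]
    exact hmat G f hG (fun i j => rfl) j
  have hRe : R = Vc.comp (P.comp A) := by
    apply clm_ext_lp_single
    intro j
    rw [ContinuousLinearMap.comp_apply, ContinuousLinearMap.comp_apply, hA]
    exact hmat R (fun j => P (f j)) hR (fun i j => hWinner P hPidem hPsa _ _) j
  have hQe : Q = Vc.comp (((1 : H →L[ℂ] H) - P).comp A) := by
    apply clm_ext_lp_single
    intro j
    rw [ContinuousLinearMap.comp_apply, ContinuousLinearMap.comp_apply, hA]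
    exact hmat Q (fun j => ((1 : H →L[ℂ] H) - P) (f j)) hQ
      (fun i j => hWinner _ hP'idem hP'sa _ _) j
  refine ⟨?_, ?_, ?_, ?_⟩
  · rw [hGe]
    exact key 1 (by simp [IsIdempotentElem]) (by simp [IsSelfAdjoint])
  · rw [hRe]; exact key P hPidem hPsa
  · rw [hQe]; exact key _ hP'idem hP'sa
  · rw [hGe, hRe, hQe]
    refine ContinuousLinearMap.ext fun x => ?_
    simp only [ContinuousLinearMap.add_apply, ContinuousLinearMap.comp_apply,
      ContinuousLinearMap.one_apply, ContinuousLinearMap.sub_apply]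
    rw [← map_add]
    congr 1
    abel
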